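/- Let M ≥ 2 be an integer, set R = log(M−1), and suppose d(x,y) ≤ d_max for all x ∈ 𝒳, y ∈ 𝒴. Let X ~ P_X and Y₁, …, Y_M be independent with each Y_i ~ Q_Y. Then for every real λ < R: E[min_{1≤i≤M} d(X,Y_i)] ≤ D̃(e^{−(R−λ)},Q_Y) + (D̃(1,Q_Y) − D̃(e^{−(R−λ)},Q_Y)) · e^{−e^λ}(e^λ+1) ≤ D̃(e^{−(R−λ)},Q_Y) + d_max · e^{−e^λ}(e^λ+1). -/

import Mathlib

open MeasureTheory

/-- The pairwise correct probability `p_c(x,y,u)` with respect to the pmf `Q` on `Y`: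
`p_c(x,y,u) = Q{y' : d(x,y') < d(x,y)} + u * Q{y' : d(x,y') = d(x,y)}`. -/
noncomputable def pc {X Y : Type*} [Fintype Y] (Q : Y → ℝ) (d : X → Y → ℝ)
    (x : X) (y : Y) (u : ℝ) : ℝ :=
  (∑ y' : Y, if d x y' < d x y then Q y' else 0)
    + u * (∑ y' : Y, if d x y' = d x y then Q y' else 0)

/-- The functional `D̃(w,Q) = w⁻¹ ⬝ E_{P ⊗ Q ⊗ Unif[0,1]}[ d(X,Y) ⬝ 1{p_c(X,Y,U) ≤ w} ]`. -/
noncomputable def Dtilde {X Y : Type*} [Fintype X] [Fintype Y]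
    (P : X → ℝ) (Q : Y → ℝ) (d : X → Y → ℝ) (w : ℝ) : ℝ :=
  w⁻¹ * ∑ x : X, ∑ y : Y, P x * Q y * d x y *
    (∫ u in Set.Icc (0:ℝ) 1, if pc Q d x y u ≤ w then (1:ℝ) else 0)

section Aux

lemma sorted_adj (L : List ℝ) (h : L.Pairwise (· < ·)) :
    L.IsChain (fun u v => ∀ w ∈ L, (w ≤ u ↔ w < v)) := by
  rw [List.isChain_iff_getElem]
  intro i hi w hw
  obtain ⟨j, hj, rfl⟩ := List.mem_iff_get.1 hw
  have mono : StrictMono L.get := (List.sortedLT_iff_pairwise.2 h).strictMono_get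
  have key : ∀ k l : Fin L.length, (k:ℕ) ≤ (l:ℕ) → L.get k ≤ L.get l := by
    intro k l hkl
    rcases eq_or_lt_of_le hkl with h' | h'
    · exact le_of_eq (congrArg L.get (Fin.ext h'))
    · exact le_of_lt (mono (Fin.mk_lt_mk.mpr h'))
  constructor
  · intro hle
    have hji : (j : ℕ) ≤ i := by
      by_contra hc
      push_neg at hc
      exact absurd hle (not_le.2 (mono (show (⟨i, by omega⟩ : Fin L.length) < j from
        Fin.mk_lt_mk.mpr hc)))
    calc L.get j ≤ L.get ⟨i, by omega⟩ := key _ _ hji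
      _ < L.get ⟨i+1, by omega⟩ := mono (by simp)
  · intro hlt
    have hji : (j : ℕ) ≤ i := by
      by_contra hc
      push_neg at hc
      exact absurd hlt (not_lt.2 (key ⟨i+1, by omega⟩ j (by simpa using hc)))
    exact key _ _ hji

lemma abel_list (G : ℝ → ℝ) : ∀ (l : List (ℝ × ℝ × ℝ)),
    (l.map Prod.fst).Pairwise (· ≤ ·) →
    (∀ p ∈ l, G p.2.1 ≤ 0) →
    l.IsChain (fun p q => p.2.2 = q.2.1) →
    ∀ p q, l.head? = some p → l.getLast? = some q →
    (l.map (fun p => p.1 * (G p.2.1 - G p.2.2))).sum ≤ p.1 * G p.2.1 - q.1 * G q.2.2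
  | [], _, _, _ => by intro p q hp; simp at hp
  | [a], _, _, _ => by
      intro p q hp hq
      simp at hp hq ⊢
      subst hp; subst hq; ring_nf; exact le_refl _
  | a :: b :: l, hsort, hG, hchain => by
      intro p q hp hq
      simp only [List.head?_cons, Option.some.injEq] at hp
      obtain rfl : p = a := hp.symm
      have hq' : (b :: l).getLast? = some q := by
        rw [List.getLast?_cons_cons] at hq; exact hq
      have IH := abel_list G (b :: l) hsort.of_cons
        (fun r hr => hG r (List.mem_cons_of_mem _ hr)) hchain.tail b q rfl hq'
      have hlink : p.2.2 = b.2.1 := (List.isChain_cons_cons.1 hchain).1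
      have hpb : p.1 ≤ b.1 := by
        have := List.rel_of_pairwise_cons hsort (a' := b.1) (by simp)
        simpa using this
      have hGb : G b.2.1 ≤ 0 := hG b (by simp)
      have hsplit : (List.map (fun r => r.1 * (G r.2.1 - G r.2.2)) (p :: b :: l)).sum
          = p.1 * (G p.2.1 - G p.2.2) + (List.map (fun r => r.1 * (G r.2.1 - G r.2.2)) (b :: l)).sum := by
        simp
      rw [hsplit, hlink]
      nlinarith [IH]

lemma pow_expand {Y : Type*} [Fintype Y] (g : Y → ℝ) (M : ℕ) :
    (∑ y, g y) ^ M = ∑ f : Fin M → Y, ∏ i, g (f i) := by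
  classical
  rw [← Fintype.piFinset_univ]
  rw [← Finset.prod_univ_sum]
  simp [Finset.prod_const]

lemma stepA {Y : Type*} [Fintype Y] [Nonempty Y] (Q c : Y → ℝ) (M : ℕ)
    (H : (Finset.univ : Finset (Fin M)).Nonempty) :
    ∑ f : Fin M → Y, (∏ i, Q (f i)) * (Finset.univ.inf' H fun i => c (f i))
      = ∑ v ∈ Finset.image c Finset.univ,
          v * ((∑ y, if v ≤ c y then Q y else 0) ^ M - (∑ y, if v < c y then Q y else 0) ^ M) := by
  classical
  have expand : ∀ (p : ℝ → ℝ → Prop) [∀ v w, Decidable (p v w)] (v : ℝ),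
      (∑ y, if p v (c y) then Q y else 0) ^ M
        = ∑ f : Fin M → Y, (∏ i, Q (f i)) * (if ∀ i, p v (c (f i)) then (1:ℝ) else 0) := by
    intro p _ v
    rw [pow_expand]
    refine Finset.sum_congr rfl fun f _ => ?_
    calc (∏ i, if p v (c (f i)) then Q (f i) else 0)
        = ∏ i, (Q (f i) * if p v (c (f i)) then (1:ℝ) else 0) := by
          refine Finset.prod_congr rfl fun i _ => ?_
          by_cases h : p v (c (f i)) <;> simp [h]
      _ = (∏ i, Q (f i)) * ∏ i, (if p v (c (f i)) then (1:ℝ) else 0) :=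
          Finset.prod_mul_distrib
      _ = (∏ i, Q (f i)) * (if ∀ i, p v (c (f i)) then (1:ℝ) else 0) := by
          simp [Fintype.prod_boole]
  symm
  calc ∑ v ∈ Finset.image c Finset.univ,
          v * ((∑ y, if v ≤ c y then Q y else 0) ^ M - (∑ y, if v < c y then Q y else 0) ^ M)
      = ∑ v ∈ Finset.image c Finset.univ, ∑ f : Fin M → Y,
          v * ((∏ i, Q (f i)) * (if ∀ i, v ≤ c (f i) then (1:ℝ) else 0)
             - (∏ i, Q (f i)) * (if ∀ i, v < c (f i) then (1:ℝ) else 0)) := by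
        refine Finset.sum_congr rfl fun v _ => ?_
        rw [expand (· ≤ ·) v, expand (· < ·) v, ← Finset.sum_sub_distrib, Finset.mul_sum]
    _ = ∑ f : Fin M → Y, ∑ v ∈ Finset.image c Finset.univ,
          v * ((∏ i, Q (f i)) * (if ∀ i, v ≤ c (f i) then (1:ℝ) else 0)
             - (∏ i, Q (f i)) * (if ∀ i, v < c (f i) then (1:ℝ) else 0)) := Finset.sum_comm
    _ = ∑ f : Fin M → Y, (∏ i, Q (f i)) * (Finset.univ.inf' H fun i => c (f i)) := by
        refine Finset.sum_congr rfl fun f _ => ?_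
        set m := Finset.univ.inf' H fun i => c (f i) with hm
        obtain ⟨i0, _, hi0⟩ := Finset.exists_mem_eq_inf' H fun i => c (f i)
        have hmem : m ∈ Finset.image c Finset.univ :=
          Finset.mem_image.2 ⟨f i0, Finset.mem_univ _, hi0.symm⟩
        have key : ∀ v, ((if ∀ i, v ≤ c (f i) then (1:ℝ) else 0)
            - (if ∀ i, v < c (f i) then (1:ℝ) else 0)) = if v = m then 1 else 0 := by
          intro v
          have hle : (∀ i, v ≤ c (f i)) ↔ v ≤ m := by
            rw [hm, Finset.le_inf'_iff]; simp
          have hlt : (∀ i, v < c (f i)) ↔ v < m := by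
            rw [hm, Finset.lt_inf'_iff]; simp
          rw [if_congr hle rfl rfl, if_congr hlt rfl rfl]
          rcases lt_trichotomy v m with h | h | h
          · simp [h.le, h, h.ne]
          · simp [h]
          · simp [not_le.2 h, not_lt.2 h.le, h.ne']
        calc ∑ v ∈ Finset.image c Finset.univ,
              v * ((∏ i, Q (f i)) * (if ∀ i, v ≤ c (f i) then (1:ℝ) else 0)
                 - (∏ i, Q (f i)) * (if ∀ i, v < c (f i) then (1:ℝ) else 0))
            = ∑ v ∈ Finset.image c Finset.univ, (∏ i, Q (f i)) * (if v = m then v else 0) := by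
              refine Finset.sum_congr rfl fun v _ => ?_
              rw [← mul_sub, key v]
              by_cases h : v = m <;> simp [h] <;> ring
          _ = (∏ i, Q (f i)) * m := by
              rw [← Finset.mul_sum]
              congr 1
              rw [Finset.sum_ite_eq' (Finset.image c Finset.univ) m (fun v => v)]
              simp [hmem]

lemma fiber_integral {Y : Type*} [Fintype Y] (Q c : Y → ℝ) (hQ0 : ∀ y, 0 ≤ Q y)
    (w v : ℝ) :
    (∑ y', if c y' = v then Q y' else 0) *
      (∫ u in Set.Icc (0:ℝ) 1,
        if (∑ y', if c y' < v then Q y' else 0) + u * (∑ y', if c y' = v then Q y' else 0) ≤ w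
        then (1:ℝ) else 0)
    = min (∑ y', if c y' ≤ v then Q y' else 0) w - min (∑ y', if c y' < v then Q y' else 0) w := by
  classical
  set A := (∑ y', if c y' < v then Q y' else 0) with hA
  set B := (∑ y', if c y' = v then Q y' else 0) with hB
  have hC : (∑ y', if c y' ≤ v then Q y' else 0) = A + B := by
    rw [hA, hB, ← Finset.sum_add_distrib]
    refine Finset.sum_congr rfl fun y _ => ?_
    rcases lt_trichotomy (c y) v with h | h | h
    · simp [h, h.le, h.ne]
    · simp [h]
    · simp [not_le.2 h, not_lt.2 h.le, h.ne']
  rw [hC]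
  have hB0 : 0 ≤ B := Finset.sum_nonneg fun y _ => by
    by_cases h : c y = v <;> simp [h, hQ0 y]
  rcases eq_or_lt_of_le hB0 with hB0' | hBpos
  · rw [← hB0', zero_mul, add_zero, sub_self]
  · set r := (w - A) / B with hr
    have hcond : ∀ u : ℝ, (A + u * B ≤ w) ↔ u ≤ r := by
      intro u
      rw [hr, le_div_iff₀ hBpos]
      constructor <;> intro <;> linarith
    have key : (∫ u in Set.Icc (0:ℝ) 1, if A + u * B ≤ w then (1:ℝ) else 0)
        = max 0 (min 1 r) := by
      simp only [hcond]
      have heq : (fun u : ℝ => if u ≤ r then (1:ℝ) else 0)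
          = fun u : ℝ => (Set.Iic r).indicator (fun _ => (1:ℝ)) u := by
        funext u
        rw [Set.indicator_apply]
        simp [Set.mem_Iic]
      have hset : Set.Icc (0:ℝ) 1 ∩ Set.Iic r = Set.Icc 0 (min 1 r) := by
        ext u; simp [Set.mem_Icc, Set.mem_Iic, le_min_iff, and_assoc]
      rw [heq, MeasureTheory.setIntegral_indicator measurableSet_Iic,
        hset, MeasureTheory.setIntegral_const, Real.volume_real_Icc,
        smul_eq_mul, mul_one, sub_zero]
      rw [max_comm]
    rw [key]
    rcases le_total w A with h1 | h1
    · have hrle : r ≤ 0 := div_nonpos_iff.2 (Or.inr ⟨by linarith, hB0⟩)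
      rw [min_eq_right h1, min_eq_right (by linarith : w ≤ A + B), max_eq_left]
      · ring
      · exact (min_le_right 1 r).trans hrle
    · rcases le_total w (A + B) with h2 | h2
      · have hr0 : 0 ≤ r := div_nonneg (by linarith) hB0
        have hr1 : r ≤ 1 := (div_le_one hBpos).2 (by linarith)
        rw [min_eq_left h1, min_eq_right h2, max_eq_right (le_min (by norm_num) hr0),
          min_eq_right hr1, hr]
        field_simp
      · have hr1 : (1:ℝ) ≤ r := (one_le_div hBpos).2 (by linarith)
        rw [min_eq_left h1, min_eq_left h2, max_eq_right (le_min (by norm_num) (by linarith)),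
          min_eq_left hr1]
        ring

lemma stepB {Y : Type*} [Fintype Y] (Q c : Y → ℝ) (hQ0 : ∀ y, 0 ≤ Q y) (w : ℝ) :
    ∑ y, Q y * c y * (∫ u in Set.Icc (0:ℝ) 1,
        if (∑ y', if c y' < c y then Q y' else 0)
            + u * (∑ y', if c y' = c y then Q y' else 0) ≤ w then (1:ℝ) else 0)
      = ∑ v ∈ Finset.image c Finset.univ,
          v * (min (∑ y', if c y' ≤ v then Q y' else 0) w
             - min (∑ y', if c y' < v then Q y' else 0) w) := by
  classical
  rw [← Finset.sum_fiberwise_of_maps_to (g := c) (t := Finset.image c Finset.univ)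
    (fun y _ => Finset.mem_image_of_mem c (Finset.mem_univ y))]
  refine Finset.sum_congr rfl fun v hv => ?_
  calc ∑ y ∈ Finset.univ.filter (fun y => c y = v), Q y * c y * (∫ u in Set.Icc (0:ℝ) 1,
        if (∑ y', if c y' < c y then Q y' else 0)
            + u * (∑ y', if c y' = c y then Q y' else 0) ≤ w then (1:ℝ) else 0)
      = ∑ y ∈ Finset.univ.filter (fun y => c y = v), Q y * (v * (∫ u in Set.Icc (0:ℝ) 1,
          if (∑ y', if c y' < v then Q y' else 0)
            + u * (∑ y', if c y' = v then Q y' else 0) ≤ w then (1:ℝ) else 0)) := by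
        refine Finset.sum_congr rfl fun y hy => ?_
        have hcy : c y = v := (Finset.mem_filter.1 hy).2
        rw [hcy]; ring
    _ = (∑ y ∈ Finset.univ.filter (fun y => c y = v), Q y) * (v * (∫ u in Set.Icc (0:ℝ) 1,
          if (∑ y', if c y' < v then Q y' else 0)
            + u * (∑ y', if c y' = v then Q y' else 0) ≤ w then (1:ℝ) else 0)) := by
        rw [← Finset.sum_mul]
    _ = v * ((∑ y', if c y' = v then Q y' else 0) * (∫ u in Set.Icc (0:ℝ) 1,
          if (∑ y', if c y' < v then Q y' else 0)
            + u * (∑ y', if c y' = v then Q y' else 0) ≤ w then (1:ℝ) else 0)) := by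
        rw [Finset.sum_filter]; ring
    _ = v * (min (∑ y', if c y' ≤ v then Q y' else 0) w
             - min (∑ y', if c y' < v then Q y' else 0) w) := by
        rw [fiber_integral Q c hQ0 w v]

lemma G_w1 (w K E : ℝ) (M : ℕ) (hw : 0 < w) (hw1 : w ≤ 1) (hE : w * ((M:ℝ) - 1) = E) (hE0 : 0 ≤ E)
    (hK : K = Real.exp (-E) * (E + 1)) (hM : 2 ≤ M) :
    ∀ t, w ≤ t → t ≤ 1 → (1 - t)^M - K * (1 - t) ≤ 0 := by
  intro t hwt ht1
  set s := 1 - t with hs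
  have hs0 : 0 ≤ s := by simp [hs]; linarith
  have hsle : s ≤ 1 - w := by simp [hs]; linarith
  have h1w : (0:ℝ) ≤ 1 - w := by linarith
  have hMK : Real.exp (-E) ≤ K := by
    rw [hK]
    nlinarith [Real.exp_pos (-E)]
  have h2 : s ^ (M - 1) ≤ Real.exp (-E) := by
    calc s ^ (M-1) ≤ (1 - w) ^ (M-1) := pow_le_pow_left₀ hs0 hsle _
      _ ≤ Real.exp (-w) ^ (M-1) := pow_le_pow_left₀ h1w (by linarith [Real.add_one_le_exp (-w)]) _
      _ = Real.exp (((M:ℝ) - 1) * (-w)) := by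
          rw [← Real.exp_nat_mul]
          congr 1
          push_cast [Nat.cast_sub (by omega : 1 ≤ M)]
          ring
      _ = Real.exp (-E) := by rw [← hE]; ring_nf
  have hpow : s ^ M = s ^ (M-1) * s := by
    rw [← pow_succ]
    congr 1
    omega
  have : s ^ M ≤ K * s := by
    rw [hpow]
    calc s ^ (M-1) * s ≤ Real.exp (-E) * s := mul_le_mul_of_nonneg_right h2 hs0
      _ ≤ K * s := mul_le_mul_of_nonneg_right hMK hs0
  linarith

lemma G_nonpos (w K E : ℝ) (M : ℕ) (hw : 0 < w) (hw1 : w ≤ 1) (hE : w * ((M:ℝ) - 1) = E)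
    (hE0 : 0 ≤ E) (hK : K = Real.exp (-E) * (E + 1)) (hM : 2 ≤ M) :
    ∀ t, 0 ≤ t → t ≤ 1 →
      (1 - t)^M + (1 - K)/w * min t w + K * t - 1 ≤ 0 := by
  intro t ht0 ht1
  rcases le_total w t with h | h
  · rw [min_eq_right h]
    have := G_w1 w K E M hw hw1 hE hE0 hK hM t h ht1
    have hww : (1 - K)/w * w = 1 - K := by field_simp
    rw [hww]
    linarith
  · rw [min_eq_left h]
    set θ := t / w with hθ
    have hθ0 : 0 ≤ θ := div_nonneg ht0 hw.le
    have hθ1 : θ ≤ 1 := (div_le_one hw).2 h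
    have htθ : t = θ * w := by rw [hθ]; field_simp
    have hconv := (convexOn_pow (𝕜 := ℝ) M).2 (Set.mem_Ici.2 (by norm_num : (0:ℝ) ≤ 1))
      (Set.mem_Ici.2 (by linarith : (0:ℝ) ≤ 1 - w)) (by linarith : (0:ℝ) ≤ 1 - θ) hθ0
      (by ring : (1 - θ) + θ = 1)
    simp only [smul_eq_mul] at hconv
    have harg : (1 - θ) * 1 + θ * (1 - w) = 1 - t := by rw [htθ]; ring
    rw [harg, one_pow] at hconv
    have hGw := G_w1 w K E M hw hw1 hE hE0 hK hM w (le_refl w) hw1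
    have hlin : (1 - K)/w * t = (1 - K) * θ := by rw [htθ]; field_simp
    rw [hlin]
    have hKt : K * t = K * (θ * w) := by rw [← htθ]
    nlinarith [hconv, mul_le_mul_of_nonneg_left hGw hθ0, hKt]

lemma stepC {Y : Type*} [Fintype Y] [Nonempty Y] (Q c : Y → ℝ)
    (hQ0 : ∀ y, 0 ≤ Q y) (hQ1 : ∑ y, Q y = 1) (hc : ∀ y, 0 ≤ c y)
    (G : ℝ → ℝ) (hG : ∀ t, 0 ≤ t → t ≤ 1 → G t ≤ 0) (hG1 : G 1 = 0) :
    ∑ v ∈ Finset.image c Finset.univ,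
      v * (G (∑ y', if c y' < v then Q y' else 0) - G (∑ y', if c y' ≤ v then Q y' else 0)) ≤ 0 := by
  classical
  set A : ℝ → ℝ := fun v => ∑ y', if c y' < v then Q y' else 0 with hA
  set C : ℝ → ℝ := fun v => ∑ y', if c y' ≤ v then Q y' else 0 with hC
  set V := Finset.image c Finset.univ with hV
  set L := V.sort (· ≤ ·) with hL
  set l : List (ℝ × ℝ × ℝ) := L.map (fun v => (v, A v, C v)) with hl
  show ∑ v ∈ V, v * (G (A v) - G (C v)) ≤ 0
  have hA01 : ∀ v, 0 ≤ A v ∧ A v ≤ 1 := by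
    intro v
    constructor
    · exact Finset.sum_nonneg fun y _ => by by_cases h : c y < v <;> simp [h, hQ0 y]
    · rw [← hQ1]
      exact Finset.sum_le_sum fun y _ => by by_cases h : c y < v <;> simp [h, hQ0 y]
  have hGA : ∀ v, G (A v) ≤ 0 := fun v => hG _ (hA01 v).1 (hA01 v).2
  have hmemL : ∀ y : Y, c y ∈ L :=
    fun y => (Finset.mem_sort _).2 (Finset.mem_image_of_mem c (Finset.mem_univ y))
  have hsum : ∑ v ∈ V, v * (G (A v) - G (C v))
      = (l.map (fun p => p.1 * (G p.2.1 - G p.2.2))).sum := by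
    rw [hl, List.map_map]
    rw [show ((fun p : ℝ × ℝ × ℝ => p.1 * (G p.2.1 - G p.2.2)) ∘ fun v => (v, A v, C v))
      = fun v => v * (G (A v) - G (C v)) from rfl]
    rw [← Finset.sum_map_toList V (fun v => v * (G (A v) - G (C v)))]
    exact (List.Perm.sum_eq ((Finset.sort_perm_toList V (fun x1 x2 : ℝ => x1 ≤ x2)).map _)).symm
  have hLne : L ≠ [] := by
    intro h
    have := hmemL (Classical.arbitrary Y)
    rw [h] at this
    exact absurd this List.not_mem_nil
  have hlne : l ≠ [] := by simp [hl, hLne]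
  have hsorted : (l.map Prod.fst).Pairwise (· ≤ ·) := by
    rw [hl, List.map_map]
    rw [show (Prod.fst ∘ fun v : ℝ => (v, A v, C v)) = id from rfl, List.map_id]
    exact Finset.pairwise_sort _ _
  have hGs : ∀ p ∈ l, G p.2.1 ≤ 0 := by
    intro p hp
    rw [hl] at hp
    obtain ⟨v, _, rfl⟩ := List.mem_map.1 hp
    exact hGA v
  have hchain : l.IsChain (fun p q => p.2.2 = q.2.1) := by
    rw [hl, List.isChain_map]
    refine (sorted_adj L (List.sortedLT_iff_pairwise.1 (Finset.sortedLT_sort V))).imp ?_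
    intro u v huv
    show C u = A v
    refine Finset.sum_congr rfl fun y _ => ?_
    rw [if_congr (huv (c y) (hmemL y)) rfl rfl]
  have hhead : l.head? = some (l.head hlne) := List.head?_eq_head hlne
  have hlast : l.getLast? = some (l.getLast hlne) := List.getLast?_eq_getLast hlne
  have habel := abel_list G l hsorted hGs hchain _ _ hhead hlast
  rw [hsum]
  refine habel.trans ?_
  have hheadeq : l.head hlne = ((L.head hLne), A (L.head hLne), C (L.head hLne)) :=
    List.head_map _
  have hlasteq : l.getLast hlne = ((L.getLast hLne), A (L.getLast hLne), C (L.getLast hLne)) :=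
    List.getLast_map _
  set v0 := L.head hLne with hv0
  set v1 := L.getLast hLne with hv1
  have hv00 : 0 ≤ v0 := by
    obtain ⟨y, _, hy⟩ := Finset.mem_image.1
      ((Finset.mem_sort (α := ℝ) (· ≤ ·)).1 (List.head_mem hLne))
    rw [hv0, ← hy]
    exact hc y
  have hv1max : ∀ y : Y, c y ≤ v1 := by
    intro y
    obtain ⟨j, hget⟩ := List.mem_iff_get.1 (hmemL y)
    have hsortle : List.Pairwise (· ≤ ·) L := Finset.pairwise_sort _ _
    have hlg : L.getLast hLne = L.get ⟨L.length - 1, by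
        have := List.length_pos_iff.2 hLne; omega⟩ := List.getLast_eq_getElem hLne
    rw [hv1, hlg, ← hget]
    exact hsortle.rel_get_of_le (by
      simp only [Fin.le_def]
      omega)
  have hCv1 : C v1 = 1 := by
    rw [hC, ← hQ1]
    exact Finset.sum_congr rfl fun y _ => by simp [hv1max y]
  rw [hheadeq, hlasteq]
  simp only [hCv1, hG1, mul_zero, sub_zero]
  exact mul_nonpos_iff.2 (Or.inl ⟨hv00, hGA v0⟩)

lemma complement_le {Y : Type*} [Fintype Y] (Q c : Y → ℝ) (hQ1 : ∑ y, Q y = 1) (v : ℝ) :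
    (∑ y, if v ≤ c y then Q y else 0) = 1 - (∑ y, if c y < v then Q y else 0) := by
  rw [← hQ1, ← Finset.sum_sub_distrib]
  refine Finset.sum_congr rfl fun y _ => ?_
  rcases le_or_gt v (c y) with h | h
  · simp [h, not_lt.2 h]
  · simp [h, not_le.2 h]

lemma complement_lt {Y : Type*} [Fintype Y] (Q c : Y → ℝ) (hQ1 : ∑ y, Q y = 1) (v : ℝ) :
    (∑ y, if v < c y then Q y else 0) = 1 - (∑ y, if c y ≤ v then Q y else 0) := by
  rw [← hQ1, ← Finset.sum_sub_distrib]
  refine Finset.sum_congr rfl fun y _ => ?_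
  rcases lt_or_ge v (c y) with h | h
  · simp [h, not_le.2 h]
  · simp [not_lt.2 h, h]

lemma AleC {Y : Type*} [Fintype Y] (Q c : Y → ℝ) (hQ0 : ∀ y, 0 ≤ Q y) (v : ℝ) :
    (∑ y, if c y < v then Q y else 0) ≤ (∑ y, if c y ≤ v then Q y else 0) := by
  refine Finset.sum_le_sum fun y _ => ?_
  by_cases h : c y < v
  · simp [h, h.le]
  · by_cases h' : c y ≤ v <;> simp [h, h', hQ0 y]

lemma Cle1 {Y : Type*} [Fintype Y] (Q c : Y → ℝ) (hQ0 : ∀ y, 0 ≤ Q y) (hQ1 : ∑ y, Q y = 1)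
    (v : ℝ) : (∑ y, if c y ≤ v then Q y else 0) ≤ 1 := by
  rw [← hQ1]
  exact Finset.sum_le_sum fun y _ => by by_cases h : c y ≤ v <;> simp [h, hQ0 y]

lemma A0le {Y : Type*} [Fintype Y] (Q c : Y → ℝ) (hQ0 : ∀ y, 0 ≤ Q y) (v : ℝ) :
    0 ≤ (∑ y, if c y < v then Q y else 0) :=
  Finset.sum_nonneg fun y _ => by by_cases h : c y < v <;> simp [h, hQ0 y]

end Aux

/-- Random coding bound: with `M ≥ 2` i.i.d. codewords from `Q`, `R = log (M-1)`, bounded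
distortion `d ≤ d_max`, and any `λ < R`,
`E[min_i d(X,Y_i)] ≤ D̃(e^{−(R−λ)},Q) + (D̃(1,Q) − D̃(e^{−(R−λ)},Q)) e^{−e^λ}(e^λ+1)`
`≤ D̃(e^{−(R−λ)},Q) + d_max e^{−e^λ}(e^λ+1)`. -/
theorem random_coding_bound {X Y : Type*} [Fintype X] [Fintype Y] [Nonempty X] [Nonempty Y]
    (P : X → ℝ) (hP0 : ∀ x, 0 ≤ P x) (hP1 : ∑ x : X, P x = 1)
    (Q : Y → ℝ) (hQ0 : ∀ y, 0 ≤ Q y) (hQ1 : ∑ y : Y, Q y = 1)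
    (d : X → Y → ℝ) (hd : ∀ x y, 0 ≤ d x y)
    (dmax : ℝ) (hdmax : ∀ x y, d x y ≤ dmax)
    (M : ℕ) (hM : 2 ≤ M) (lam : ℝ) (hlam : lam < Real.log ((M:ℝ) - 1)) :
    (∑ x : X, P x * ∑ f : Fin M → Y, (∏ i : Fin M, Q (f i)) *
        ((Finset.univ : Finset (Fin M)).inf' ⟨⟨0, by omega⟩, Finset.mem_univ _⟩
          fun i => d x (f i)))
      ≤ Dtilde P Q d (Real.exp (-(Real.log ((M:ℝ) - 1) - lam)))
        + (Dtilde P Q d 1 - Dtilde P Q d (Real.exp (-(Real.log ((M:ℝ) - 1) - lam))))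
          * (Real.exp (-(Real.exp lam)) * (Real.exp lam + 1))
    ∧ Dtilde P Q d (Real.exp (-(Real.log ((M:ℝ) - 1) - lam)))
        + (Dtilde P Q d 1 - Dtilde P Q d (Real.exp (-(Real.log ((M:ℝ) - 1) - lam))))
          * (Real.exp (-(Real.exp lam)) * (Real.exp lam + 1))
      ≤ Dtilde P Q d (Real.exp (-(Real.log ((M:ℝ) - 1) - lam)))
        + dmax * (Real.exp (-(Real.exp lam)) * (Real.exp lam + 1)) := by
  classical
  have hMr1 : (1:ℝ) ≤ (M:ℝ) - 1 := by
    have : (2:ℝ) ≤ (M:ℝ) := by exact_mod_cast hM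
    linarith
  have hMr0 : (0:ℝ) < (M:ℝ) - 1 := by linarith
  set E := Real.exp lam with hE
  have hE0 : 0 < E := Real.exp_pos lam
  have hEM : E < (M:ℝ) - 1 := by
    rw [hE, ← Real.exp_log hMr0]
    exact Real.exp_lt_exp.2 hlam
  set w := Real.exp (-(Real.log ((M:ℝ) - 1) - lam)) with hwdef
  have hwE : w = E / ((M:ℝ) - 1) := by
    rw [hwdef, hE, neg_sub, Real.exp_sub, Real.exp_log hMr0]
  have hw0 : 0 < w := Real.exp_pos _
  have hw1 : w < 1 := by
    rw [hwE]
    exact (div_lt_one hMr0).2 hEM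
  have hwMr : w * ((M:ℝ) - 1) = E := by
    rw [hwE]
    field_simp
  set K := Real.exp (-E) * (E + 1) with hK
  have hK0 : 0 ≤ K := by positivity
  set G : ℝ → ℝ := fun t => (1 - t)^M + (1 - K)/w * min t w + K * t - 1 with hG
  have hGnp : ∀ t, 0 ≤ t → t ≤ 1 → G t ≤ 0 :=
    G_nonpos w K E M hw0 hw1.le hwMr hE0.le hK hM
  have hG1 : G 1 = 0 := by
    rw [hG]
    simp only [sub_self, min_eq_right hw1.le]
    rw [zero_pow (by omega : M ≠ 0)]
    field_simp
    ring
  -- closed forms for Dtilde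
  have hDclosed : ∀ w' : ℝ, Dtilde P Q d w' = w'⁻¹ * ∑ x : X, P x *
      ∑ v ∈ Finset.image (fun y => d x y) Finset.univ,
        v * (min (∑ y', if d x y' ≤ v then Q y' else 0) w'
           - min (∑ y', if d x y' < v then Q y' else 0) w') := by
    intro w'
    rw [Dtilde]
    congr 1
    refine Finset.sum_congr rfl fun x _ => ?_
    rw [← stepB Q (fun y => d x y) hQ0 w', Finset.mul_sum]
    refine Finset.sum_congr rfl fun y _ => ?_
    simp only [pc]
    simp only [mul_assoc]
    congr
  -- per-x inequality
  have hperx : ∀ x : X,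
      (∑ f : Fin M → Y, (∏ i : Fin M, Q (f i)) *
        ((Finset.univ : Finset (Fin M)).inf' ⟨⟨0, by omega⟩, Finset.mem_univ _⟩
          fun i => d x (f i)))
      ≤ (1 - K) * w⁻¹ * (∑ v ∈ Finset.image (fun y => d x y) Finset.univ,
            v * (min (∑ y', if d x y' ≤ v then Q y' else 0) w
               - min (∑ y', if d x y' < v then Q y' else 0) w))
        + K * (∑ v ∈ Finset.image (fun y => d x y) Finset.univ,
            v * ((∑ y', if d x y' ≤ v then Q y' else 0)
               - (∑ y', if d x y' < v then Q y' else 0))) := by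
    intro x
    rw [stepA Q (fun y => d x y) M ⟨⟨0, by omega⟩, Finset.mem_univ _⟩]
    have hCle := stepC Q (fun y => d x y) hQ0 hQ1 (fun y => hd x y) G hGnp hG1
    have hexpand : ∀ v : ℝ,
        v * ((∑ y, if v ≤ d x y then Q y else 0) ^ M - (∑ y, if v < d x y then Q y else 0) ^ M)
        = v * (G (∑ y', if d x y' < v then Q y' else 0) - G (∑ y', if d x y' ≤ v then Q y' else 0))
          + (1 - K) * w⁻¹ * (v * (min (∑ y', if d x y' ≤ v then Q y' else 0) w
               - min (∑ y', if d x y' < v then Q y' else 0) w))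
          + K * (v * ((∑ y', if d x y' ≤ v then Q y' else 0)
               - (∑ y', if d x y' < v then Q y' else 0))) := by
      intro v
      rw [complement_le Q (fun y => d x y) hQ1 v, complement_lt Q (fun y => d x y) hQ1 v, hG]
      simp only []
      rw [div_eq_mul_inv]
      ring
    rw [Finset.sum_congr rfl fun v _ => hexpand v]
    rw [Finset.sum_add_distrib, Finset.sum_add_distrib, ← Finset.mul_sum, ← Finset.mul_sum]
    linarith [hCle]
  -- summing over x
  have hsummed :
      (∑ x : X, P x * ∑ f : Fin M → Y, (∏ i : Fin M, Q (f i)) *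
        ((Finset.univ : Finset (Fin M)).inf' ⟨⟨0, by omega⟩, Finset.mem_univ _⟩
          fun i => d x (f i)))
      ≤ (1 - K) * Dtilde P Q d w + K * Dtilde P Q d 1 := by
    have hS1 : Dtilde P Q d 1 = ∑ x : X, P x *
        ∑ v ∈ Finset.image (fun y => d x y) Finset.univ,
          v * ((∑ y', if d x y' ≤ v then Q y' else 0)
             - (∑ y', if d x y' < v then Q y' else 0)) := by
      rw [hDclosed 1, inv_one, one_mul]
      refine Finset.sum_congr rfl fun x _ => ?_
      congr 1
      refine Finset.sum_congr rfl fun v _ => ?_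
      rw [min_eq_left (Cle1 Q (fun y => d x y) hQ0 hQ1 v),
        min_eq_left ((AleC Q (fun y => d x y) hQ0 v).trans (Cle1 Q (fun y => d x y) hQ0 hQ1 v))]
    rw [hS1, hDclosed w, ← mul_assoc, Finset.mul_sum, Finset.mul_sum, ← Finset.sum_add_distrib]
    refine Finset.sum_le_sum fun x _ => ?_
    have h1 := hperx x
    calc P x * ∑ f : Fin M → Y, (∏ i : Fin M, Q (f i)) *
        ((Finset.univ : Finset (Fin M)).inf' ⟨⟨0, by omega⟩, Finset.mem_univ _⟩
          fun i => d x (f i))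
        ≤ P x * ((1 - K) * w⁻¹ * (∑ v ∈ Finset.image (fun y => d x y) Finset.univ,
            v * (min (∑ y', if d x y' ≤ v then Q y' else 0) w
               - min (∑ y', if d x y' < v then Q y' else 0) w))
          + K * (∑ v ∈ Finset.image (fun y => d x y) Finset.univ,
            v * ((∑ y', if d x y' ≤ v then Q y' else 0)
               - (∑ y', if d x y' < v then Q y' else 0)))) :=
          mul_le_mul_of_nonneg_left h1 (hP0 x)
      _ = (1 - K) * w⁻¹ * (P x * (∑ v ∈ Finset.image (fun y => d x y) Finset.univ,
            v * (min (∑ y', if d x y' ≤ v then Q y' else 0) w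
               - min (∑ y', if d x y' < v then Q y' else 0) w)))
          + K * (P x * (∑ v ∈ Finset.image (fun y => d x y) Finset.univ,
            v * ((∑ y', if d x y' ≤ v then Q y' else 0)
               - (∑ y', if d x y' < v then Q y' else 0)))) := by ring
  -- bounds for goal 2
  have hDw0 : 0 ≤ Dtilde P Q d w := by
    rw [hDclosed w]
    refine mul_nonneg (by positivity) (Finset.sum_nonneg fun x _ => ?_)
    refine mul_nonneg (hP0 x) (Finset.sum_nonneg fun v hv => ?_)
    obtain ⟨y, _, rfl⟩ := Finset.mem_image.1 hv
    refine mul_nonneg (hd x y) ?_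
    have := AleC Q (fun y => d x y) hQ0 (d x y)
    simp only [sub_nonneg]
    exact min_le_min this (le_refl w)
  have hS1 : Dtilde P Q d 1 = ∑ x : X, P x *
      ∑ v ∈ Finset.image (fun y => d x y) Finset.univ,
        v * ((∑ y', if d x y' ≤ v then Q y' else 0)
           - (∑ y', if d x y' < v then Q y' else 0)) := by
    rw [hDclosed 1, inv_one, one_mul]
    refine Finset.sum_congr rfl fun x _ => ?_
    congr 1
    refine Finset.sum_congr rfl fun v _ => ?_
    rw [min_eq_left (Cle1 Q (fun y => d x y) hQ0 hQ1 v),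
      min_eq_left ((AleC Q (fun y => d x y) hQ0 v).trans (Cle1 Q (fun y => d x y) hQ0 hQ1 v))]
  have hD1dmax : Dtilde P Q d 1 ≤ dmax := by
    have hS1x : ∀ x : X, (∑ v ∈ Finset.image (fun y => d x y) Finset.univ,
        v * ((∑ y', if d x y' ≤ v then Q y' else 0)
           - (∑ y', if d x y' < v then Q y' else 0))) = ∑ y, Q y * d x y := by
      intro x
      have hBv : ∀ v : ℝ, ((∑ y', if d x y' ≤ v then Q y' else 0)
          - (∑ y', if d x y' < v then Q y' else 0)) = (∑ y', if d x y' = v then Q y' else 0) := by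
        intro v
        rw [← Finset.sum_sub_distrib]
        refine Finset.sum_congr rfl fun y _ => ?_
        rcases lt_trichotomy (d x y) v with h | h | h
        · simp [h, h.le, h.ne]
        · simp [h]
        · simp [not_le.2 h, not_lt.2 h.le, h.ne']
      rw [Finset.sum_congr rfl fun v _ => by rw [hBv v]]
      calc ∑ v ∈ Finset.image (fun y => d x y) Finset.univ,
            v * (∑ y', if d x y' = v then Q y' else 0)
          = ∑ v ∈ Finset.image (fun y => d x y) Finset.univ,
              (∑ y', if d x y' = v then d x y' * Q y' else 0) := by
            refine Finset.sum_congr rfl fun v _ => ?_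
            rw [Finset.mul_sum]
            refine Finset.sum_congr rfl fun y' _ => ?_
            by_cases h : d x y' = v
            · simp [h]
            · simp [h]
        _ = ∑ y' : Y, (∑ v ∈ Finset.image (fun y => d x y) Finset.univ,
              if d x y' = v then d x y' * Q y' else 0) := Finset.sum_comm
        _ = ∑ y, Q y * d x y := by
            refine Finset.sum_congr rfl fun y' _ => ?_
            rw [Finset.sum_ite_eq (Finset.image (fun y => d x y) Finset.univ) (d x y')
              (fun _ => d x y' * Q y')]
            simp [Finset.mem_image_of_mem, mul_comm]
    rw [hS1, Finset.sum_congr rfl fun x _ => by rw [hS1x x]]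
    calc ∑ x : X, P x * ∑ y, Q y * d x y
        ≤ ∑ x : X, P x * dmax := by
          refine Finset.sum_le_sum fun x _ => ?_
          refine mul_le_mul_of_nonneg_left ?_ (hP0 x)
          calc ∑ y, Q y * d x y ≤ ∑ y, Q y * dmax :=
                Finset.sum_le_sum fun y _ =>
                  mul_le_mul_of_nonneg_left (hdmax x y) (hQ0 y)
            _ = dmax := by rw [← Finset.sum_mul, hQ1, one_mul]
      _ = dmax := by rw [← Finset.sum_mul, hP1, one_mul]
  constructor
  · refine hsummed.trans (le_of_eq ?_)
    ring
  · have hmul : (Dtilde P Q d 1 - Dtilde P Q d w) * K ≤ dmax * K :=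
      mul_le_mul_of_nonneg_right (by linarith) hK0
    linarith
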